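/- Let m, x, β, K be real numbers with m > 0, x > 0, β > 0. If m + β·ln(m) > x + β·ln(x) + K, then m > x + K/(1 + β/x). -/

import Mathlib

/-- Lemma L1. If `m + β·ln m > x + β·ln x + K` with `m, x, β > 0`, then
`m > x + K / (1 + β/x)`. -/
theorem gt_add_div_of_add_log_gt (m x β K : ℝ) (hm : 0 < m) (hx : 0 < x) (hβ : 0 < β)
    (h : m + β * Real.log m > x + β * Real.log x + K) :
    m > x + K / (1 + β / x) := by
  have hpos : 0 < 1 + β / x := by positivity
  have hlog : Real.log m - Real.log x ≤ m / x - 1 := by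
    have := Real.log_le_sub_one_of_pos (show 0 < m / x by positivity)
    rwa [Real.log_div hm.ne' hx.ne'] at this
  have hK : K < (m - x) * (1 + β / x) := by
    have h1 : K < (m - x) + β * (Real.log m - Real.log x) := by nlinarith
    have h2 : β * (Real.log m - Real.log x) ≤ β * (m / x - 1) :=
      mul_le_mul_of_nonneg_left hlog hβ.le
    have h3 : β * (m / x - 1) = (m - x) * (β / x) := by field_simp
    nlinarith
  have := (div_lt_iff₀ hpos).mpr hK
  linarith
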